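/- Let P(λ) = Σ_{i=0}^k P_i λ^i with P_i ∈ ℝ^{n×n} be a matrix polynomial of degree k = ε + η + 1 with η ≤ ε. Then there exists a kn × kn matrix pencil L(λ) satisfying both ((Λ_η(λ)^T ⊗ I_n) ⊕ I_{εn})·L(λ)·((Λ_ε(λ) ⊗ I_n) ⊕ I_{ηn}) = P(λ) ⊕ 0_{εn×ηn} and ((Λ_ε(λ)^T ⊗ I_n) ⊕ I_{ηn})·L(λ)·((Λ_η(λ) ⊗ I_n) ⊕ I_{εn}) = P(λ) ⊕ 0_{ηn×εn}; in particular the double block Kronecker ansatz space DG_{η+1}(P) = G_{η+1}(P) ∩ G_{k−η}(P) contains a pencil with ansatz scalar α = 1. -/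

import Mathlib

open Matrix Polynomial
open scoped Kronecker

noncomputable section

/-- `Λ_j(λ)` as a `(j+1) × 1` matrix of real polynomials, with `i`-th entry `λ^{j-i}`. -/
def Lam (j : ℕ) : Matrix (Fin (j + 1)) (Fin 1) (Polynomial ℝ) :=
  Matrix.of fun i _ => X ^ (j - (i : ℕ))

/-- `L_κ(λ)`, the `κ × (κ+1)` pencil with `-1` on the diagonal and `λ` on the superdiagonal. -/
def Lk (κ : ℕ) : Matrix (Fin κ) (Fin (κ + 1)) (Polynomial ℝ) :=
  Matrix.of fun i j => if (j : ℕ) = (i : ℕ) then -1 else if (j : ℕ) = (i : ℕ) + 1 then X else 0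

/-- The matrix pencil `λ·A + B` as a matrix of real polynomials. -/
def pencilM {ρ γ : Type*} (A B : Matrix ρ γ ℝ) : Matrix ρ γ (Polynomial ℝ) :=
  Matrix.of fun i j => X * C (A i j) + C (B i j)

/-- The matrix polynomial `Σ_{i=0}^k Pc i · λ^i` as a matrix of real polynomials. -/
def polyOf (m n k : ℕ) (Pc : ℕ → Matrix (Fin m) (Fin n) ℝ) :
    Matrix (Fin m) (Fin n) (Polynomial ℝ) :=
  Matrix.of fun i j => ∑ t ∈ Finset.range (k + 1), X ^ t * C (Pc t i j)

/-- The flat `(n + ε'n) × kn` matrix `(Λ_{η'}(λ)ᵀ ⊗ I_n) ⊕ I_{ε'n}` (with `ε' = k - 1 - η'`),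
acting on the left in the block Kronecker ansatz equation. -/
def Eleft (n k η' : ℕ) : Matrix (Fin (k - η') × Fin n) (Fin k × Fin n) (Polynomial ℝ) :=
  Matrix.of fun p q =>
    if p.2 = q.2 ∧ (p.1 : ℕ) = 0 ∧ (q.1 : ℕ) ≤ η' then X ^ (η' - (q.1 : ℕ))
    else if p.2 = q.2 ∧ (q.1 : ℕ) = η' + (p.1 : ℕ) then 1
    else 0

/-- The flat `kn × (n + η'n)` matrix `(Λ_{ε'}(λ) ⊗ I_n) ⊕ I_{η'n}` (with `ε' = k - 1 - η'`),
acting on the right in the block Kronecker ansatz equation. -/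
def Eright (n k η' : ℕ) : Matrix (Fin k × Fin n) (Fin (η' + 1) × Fin n) (Polynomial ℝ) :=
  Matrix.of fun p q =>
    if p.2 = q.2 ∧ (q.1 : ℕ) = 0 ∧ (p.1 : ℕ) ≤ k - 1 - η' then X ^ (k - 1 - η' - (p.1 : ℕ))
    else if p.2 = q.2 ∧ (p.1 : ℕ) = (k - 1 - η') + (q.1 : ℕ) then 1
    else 0

/-- The right-hand side `(α · P(λ)) ⊕ 0` of the block Kronecker ansatz equation. -/
def GRHS (n k η' : ℕ) (α : ℝ) (Pm : Matrix (Fin n) (Fin n) (Polynomial ℝ)) :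
    Matrix (Fin (k - η') × Fin n) (Fin (η' + 1) × Fin n) (Polynomial ℝ) :=
  Matrix.of fun p q =>
    if (p.1 : ℕ) = 0 ∧ (q.1 : ℕ) = 0 then C α * Pm p.2 q.2 else 0

/-- Membership of the pencil `λ·p.1 + p.2` in the block Kronecker ansatz space
`G_{η'+1}(P)` for the `n × n` matrix polynomial with coefficients `Pc` of degree `k`. -/
def memG (n k η' : ℕ) (Pc : ℕ → Matrix (Fin n) (Fin n) ℝ)
    (p : Matrix (Fin k × Fin n) (Fin k × Fin n) ℝ ×
         Matrix (Fin k × Fin n) (Fin k × Fin n) ℝ) : Prop :=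
  ∃ α : ℝ,
    Eleft n k η' * pencilM p.1 p.2 * Eright n k η' = GRHS n k η' α (polyOf n n k Pc)

namespace Stmt11Aux


def el (h p a : ℕ) : Polynomial ℝ :=
  if p = 0 ∧ a ≤ h then X ^ (h - a) else if a = h + p then 1 else 0

def af (η k : ℕ) (P : ℕ → ℝ) (a b : ℕ) : ℝ :=
  if a = b ∧ a ≤ η then P (k - 2 * a)
  else if η + 1 ≤ a ∧ η + 1 ≤ b ∧ a + b ≤ k then -P (k - a - b)
  else 0

def bf (η k : ℕ) (P : ℕ → ℝ) (a b : ℕ) : ℝ :=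
  if a = b ∧ a ≤ η then P (k - 1 - 2 * a)
  else if η ≤ a ∧ η ≤ b ∧ 2 * η + 1 ≤ a + b ∧ a + b ≤ k - 1 then P (k - 1 - a - b)
  else 0

lemma el_zero (h a : ℕ) : el h 0 a = if a ≤ h then X ^ (h - a) else 0 := by
  unfold el
  by_cases hah : a ≤ h
  · rw [if_pos ⟨rfl, hah⟩, if_pos hah]
  · rw [if_neg (by tauto), if_neg (by omega), if_neg hah]

lemma el_pos (h p a : ℕ) (hp : p ≠ 0) : el h p a = if a = h + p then 1 else 0 := by
  unfold el
  rw [if_neg (by tauto)]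

lemma af_symm (η k : ℕ) (P : ℕ → ℝ) (a b : ℕ) : af η k P a b = af η k P b a := by
  unfold af
  split_ifs <;> first
    | rfl
    | (exfalso; omega)
    | (congr 1 <;> omega)
    | (congr 1 <;> congr 1 <;> omega)

lemma bf_symm (η k : ℕ) (P : ℕ → ℝ) (a b : ℕ) : bf η k P a b = bf η k P b a := by
  unfold bf
  split_ifs <;> first
    | rfl
    | (exfalso; omega)
    | (congr 1 <;> omega)

lemma sum_ite_pull {M : Type*} [AddCommMonoid M] (s : Finset ℕ) (c : Prop) [Decidable c]
    (f : ℕ → M) : ∑ x ∈ s, (if c then f x else 0) = if c then ∑ x ∈ s, f x else 0 := by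
  split_ifs <;> simp

lemma sum_restrict {M : Type*} [AddCommMonoid M] (K m : ℕ) (h : m + 1 ≤ K) (f : ℕ → M) :
    ∑ a ∈ Finset.range K, (if a ≤ m then f a else 0) = ∑ a ∈ Finset.range (m + 1), f a := by
  have h1 : ∑ a ∈ Finset.range (m + 1), (if a ≤ m then f a else 0)
      = ∑ a ∈ Finset.range K, (if a ≤ m then f a else 0) :=
    Finset.sum_subset (Finset.range_subset_range.mpr h)
      (fun x _ hx => if_neg (fun hxm => hx (Finset.mem_range.mpr (by omega))))
  rw [← h1]
  exact Finset.sum_congr rfl fun a ha =>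
    if_pos (by have := Finset.mem_range.mp ha; omega)

lemma sum_collapse {M : Type*} [AddCommMonoid M] (K v : ℕ) (hv : v < K) (f : ℕ → M) :
    ∑ a ∈ Finset.range K, (if a = v then f a else 0) = f v := by
  rw [Finset.sum_ite_eq' (Finset.range K) v f, if_pos (Finset.mem_range.mpr hv)]

lemma sum_pair {M : Type*} [AddCommMonoid M] (g : ℕ → M) (m : ℕ) :
    ∑ a ∈ Finset.range (m + 1), (g (2 * a + 1) + g (2 * a))
      = ∑ j ∈ Finset.range (2 * m + 2), g j := by
  induction m with
  | zero => simp [Finset.sum_range_succ, add_comm]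
  | succ m ih =>
      have e1 : 2 * (m + 1) + 2 = ((2 * m + 2) + 1) + 1 := by omega
      have e2 : 2 * (m + 1) + 1 = (2 * m + 2) + 1 := by omega
      have e3 : 2 * (m + 1) = 2 * m + 2 := by omega
      conv_lhs => rw [Finset.sum_range_succ, ih]
      conv_rhs => rw [e1, Finset.sum_range_succ, Finset.sum_range_succ]
      rw [e2, e3, add_comm (g ((2 * m + 2) + 1)) (g (2 * m + 2)), ← add_assoc]

lemma teleZero (e : ℕ) (g : ℕ → ℝ) (hg : g e = 0) :
    ∑ b ∈ Finset.range (e + 1),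
      (X * C (if b = 0 then 0 else -g (b - 1)) + C (g b)) * X ^ (e - b) = 0 := by
  have split : ∀ b ∈ Finset.range (e+1),
      (X * C (if b = 0 then 0 else -g (b - 1)) + C (g b)) * X ^ (e - b)
      = X * C (if b = 0 then 0 else -g (b - 1)) * X ^ (e - b) + C (g b) * X ^ (e - b) :=
    fun b _ => by ring
  rw [Finset.sum_congr rfl split, Finset.sum_add_distrib]
  have h1 : ∑ b ∈ Finset.range (e + 1), X * C (if b = 0 then 0 else -g (b - 1)) * X ^ (e - b)
      = ∑ i ∈ Finset.range e, -(C (g i) * X ^ (e - i)) := by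
    rw [Finset.sum_range_succ']
    simp only [if_pos rfl, if_true, eq_self_iff_true, Polynomial.C_0, mul_zero, zero_mul, add_zero]
    apply Finset.sum_congr rfl
    intro i hi
    have hie : i < e := Finset.mem_range.mp hi
    rw [if_neg (Nat.succ_ne_zero i)]
    have h3 : e - i = (e - (i + 1)) + 1 := by omega
    rw [Nat.add_sub_cancel, map_neg, h3, pow_succ]
    ring

  have h2 : ∑ b ∈ Finset.range (e + 1), C (g b) * X ^ (e - b)
      = ∑ i ∈ Finset.range e, C (g i) * X ^ (e - i) := by
    rw [Finset.sum_range_succ, hg]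
    simp only [Polynomial.C_0, zero_mul, add_zero]
  rw [h1, h2, Finset.sum_neg_distrib]
  ring


section Region
variable {η ε k : ℕ} (hk : k = ε + η + 1) (hεη : η ≤ ε) (P : ℕ → ℝ)

lemma af_low {a b : ℕ} (ha : a ≤ η) :
    af η k P a b = if b = a then P (k - 2 * a) else 0 := by
  unfold af
  by_cases hba : b = a
  · rw [if_pos ⟨hba.symm, ha⟩, if_pos hba]
  · rw [if_neg (by tauto), if_neg (by omega), if_neg hba]

include hk hεη in
lemma bf_low {a b : ℕ} (ha : a ≤ η) (hb : b ≤ ε) :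
    bf η k P a b
      = (if b = a then P (k - 1 - 2 * a) else 0)
        + (if a = η ∧ η + 1 ≤ b then P (ε - b) else 0) := by
  unfold bf
  by_cases hba : b = a
  · rw [if_pos ⟨hba.symm, ha⟩, if_pos hba, if_neg (by omega), add_zero]
  · rw [if_neg (by tauto)]
    by_cases hc : a = η ∧ η + 1 ≤ b
    · rw [if_pos ⟨by omega, by omega, by omega, by omega⟩, if_pos hc, if_neg hba, zero_add,
        show k - 1 - a - b = ε - b by omega]
    · rw [if_neg (by omega), if_neg hba, if_neg hc, add_zero]

include hk hεη in
lemma main00 :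
    ∑ a ∈ Finset.range k, ∑ b ∈ Finset.range k,
        el η 0 a * (X * C (af η k P a b) + C (bf η k P a b)) * el ε 0 b
      = ∑ t ∈ Finset.range (k + 1), X ^ t * C (P t) := by
  have hηk : η + 1 ≤ k := by omega
  have hεk : ε + 1 ≤ k := by omega
  -- Step 1: restrict ranges
  have h1 : ∀ a b : ℕ, el η 0 a * (X * C (af η k P a b) + C (bf η k P a b)) * el ε 0 b
      = if a ≤ η then (if b ≤ ε then
          X ^ (η - a) * (X * C (af η k P a b) + C (bf η k P a b)) * X ^ (ε - b) else 0)
        else 0 := by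
    intro a b
    rw [el_zero, el_zero]
    by_cases c1 : a ≤ η <;> by_cases c2 : b ≤ ε <;> simp [c1, c2]
  have e1 : ∀ a : ℕ, ∑ b ∈ Finset.range k,
        el η 0 a * (X * C (af η k P a b) + C (bf η k P a b)) * el ε 0 b
      = if a ≤ η then ∑ b ∈ Finset.range (ε + 1),
          X ^ (η - a) * (X * C (af η k P a b) + C (bf η k P a b)) * X ^ (ε - b) else 0 := by
    intro a
    by_cases c1 : a ≤ η
    · rw [if_pos c1, Finset.sum_congr rfl (fun b _ => by rw [h1 a b, if_pos c1])]
      exact sum_restrict k ε hεk _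
    · rw [if_neg c1]
      exact Finset.sum_eq_zero fun b _ => by rw [h1 a b, if_neg c1]
  rw [Finset.sum_congr rfl (fun a _ => e1 a), sum_restrict k η hηk]
  -- Step 2: region split
  have step2 : ∀ a ∈ Finset.range (η + 1), ∀ b ∈ Finset.range (ε + 1),
      X ^ (η - a) * (X * C (af η k P a b) + C (bf η k P a b)) * X ^ (ε - b)
      = ((if b = a then X ^ (η - a) * (X * C (P (k - 2 * a))) * X ^ (ε - b) else 0)
        + (if b = a then X ^ (η - a) * C (P (k - 1 - 2 * a)) * X ^ (ε - b) else 0))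
        + (if a = η ∧ η + 1 ≤ b then X ^ (η - a) * C (P (ε - b)) * X ^ (ε - b) else 0) := by
    intro a ha b hb
    have ha' : a ≤ η := by have := Finset.mem_range.mp ha; omega
    have hb' : b ≤ ε := by have := Finset.mem_range.mp hb; omega
    rw [af_low P ha', bf_low hk hεη P ha' hb']
    by_cases c1 : b = a
    · have hcf : ¬(a = η ∧ η + 1 ≤ b) := by omega
      subst c1
      simp [hcf, map_add]
      rw [if_neg (show ¬(b = η ∧ η < b) by omega), if_neg (show ¬(b = η ∧ η < b) by omega)]; simp
      try ring
    · by_cases c2 : a = η ∧ η + 1 ≤ b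
      · obtain ⟨ha2, hb2⟩ := c2
        subst ha2
        simp [c1, hb2, map_add, Nat.sub_self]
        try ring
      · simp [c1, c2, map_add]
        rw [if_neg (show ¬(a = η ∧ η < b) by omega), if_neg (show ¬(a = η ∧ η < b) by omega)]; simp
        try ring
  rw [Finset.sum_congr rfl (fun a ha => Finset.sum_congr rfl (fun b hb => step2 a ha b hb))]
  have split3 : ∀ a ∈ Finset.range (η + 1),
      ∑ b ∈ Finset.range (ε + 1),
        (((if b = a then X ^ (η - a) * (X * C (P (k - 2 * a))) * X ^ (ε - b) else 0)
          + (if b = a then X ^ (η - a) * C (P (k - 1 - 2 * a)) * X ^ (ε - b) else 0))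
          + (if a = η ∧ η + 1 ≤ b then X ^ (η - a) * C (P (ε - b)) * X ^ (ε - b) else 0))
      = ((∑ b ∈ Finset.range (ε + 1),
            (if b = a then X ^ (η - a) * (X * C (P (k - 2 * a))) * X ^ (ε - b) else 0))
        + (∑ b ∈ Finset.range (ε + 1),
            (if b = a then X ^ (η - a) * C (P (k - 1 - 2 * a)) * X ^ (ε - b) else 0)))
        + (∑ b ∈ Finset.range (ε + 1),
            (if a = η ∧ η + 1 ≤ b then X ^ (η - a) * C (P (ε - b)) * X ^ (ε - b) else 0)) :=
    fun a _ => by rw [Finset.sum_add_distrib, Finset.sum_add_distrib]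
  rw [Finset.sum_congr rfl split3, Finset.sum_add_distrib, Finset.sum_add_distrib]
  -- collapse S1 and S2
  have hS1 : ∑ a ∈ Finset.range (η + 1), ∑ b ∈ Finset.range (ε + 1),
      (if b = a then X ^ (η - a) * (X * C (P (k - 2 * a))) * X ^ (ε - b) else 0)
      = ∑ a ∈ Finset.range (η + 1), X ^ (η - a) * (X * C (P (k - 2 * a))) * X ^ (ε - a) :=
    Finset.sum_congr rfl fun a ha =>
      sum_collapse (ε + 1) a (by have := Finset.mem_range.mp ha; omega) _
  have hS2 : ∑ a ∈ Finset.range (η + 1), ∑ b ∈ Finset.range (ε + 1),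
      (if b = a then X ^ (η - a) * C (P (k - 1 - 2 * a)) * X ^ (ε - b) else 0)
      = ∑ a ∈ Finset.range (η + 1), X ^ (η - a) * C (P (k - 1 - 2 * a)) * X ^ (ε - a) :=
    Finset.sum_congr rfl fun a ha =>
      sum_collapse (ε + 1) a (by have := Finset.mem_range.mp ha; omega) _
  -- collapse S3
  have hS3 : ∑ a ∈ Finset.range (η + 1), ∑ b ∈ Finset.range (ε + 1),
      (if a = η ∧ η + 1 ≤ b then X ^ (η - a) * C (P (ε - b)) * X ^ (ε - b) else 0)
      = ∑ t ∈ Finset.range (ε - η), X ^ t * C (P t) := by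
    have inner : ∀ a : ℕ, ∑ b ∈ Finset.range (ε + 1),
        (if a = η ∧ η + 1 ≤ b then X ^ (η - a) * C (P (ε - b)) * X ^ (ε - b) else 0)
        = if a = η then ∑ b ∈ Finset.range (ε + 1),
            (if η + 1 ≤ b then C (P (ε - b)) * X ^ (ε - b) else 0) else 0 := by
      intro a
      by_cases c1 : a = η
      · rw [if_pos c1]
        refine Finset.sum_congr rfl fun b _ => ?_
        by_cases c2 : η + 1 ≤ b
        · rw [if_pos ⟨c1, c2⟩, if_pos c2, c1, Nat.sub_self, pow_zero, one_mul]
        · rw [if_neg (by tauto), if_neg c2]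
      · rw [if_neg c1]
        exact Finset.sum_eq_zero fun b _ => if_neg (by tauto)
    rw [Finset.sum_congr rfl (fun a _ => inner a),
      sum_collapse (η + 1) η (by omega) _,
      show ε + 1 = (η + 1) + (ε - η) by omega, Finset.sum_range_add]
    rw [Finset.sum_eq_zero (fun b hb => if_neg (by
        have := Finset.mem_range.mp hb; omega)), zero_add]
    have hterm : ∀ i ∈ Finset.range (ε - η),
        (if η + 1 ≤ η + 1 + i then C (P (ε - (η + 1 + i))) * X ^ (ε - (η + 1 + i)) else 0)
        = X ^ (ε - η - 1 - i) * C (P (ε - η - 1 - i)) := fun i _ => by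
      rw [if_pos (by omega : η + 1 ≤ η + 1 + i),
        show ε - (η + 1 + i) = ε - η - 1 - i by omega]
      exact mul_comm _ _
    exact (Finset.sum_congr rfl hterm).trans
      (Finset.sum_range_reflect (fun t => X ^ t * C (P t)) (ε - η))
  rw [hS1, hS2, hS3, ← Finset.sum_add_distrib]
  -- combine the diagonal sums
  have diag : ∑ a ∈ Finset.range (η + 1),
      (X ^ (η - a) * (X * C (P (k - 2 * a))) * X ^ (ε - a)
        + X ^ (η - a) * C (P (k - 1 - 2 * a)) * X ^ (ε - a))
      = ∑ j ∈ Finset.range (2 * η + 2), X ^ (ε - η + j) * C (P (ε - η + j)) := by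
    have hGG : ∀ a ∈ Finset.range (η + 1),
        X ^ (η - a) * (X * C (P (k - 2 * a))) * X ^ (ε - a)
          + X ^ (η - a) * C (P (k - 1 - 2 * a)) * X ^ (ε - a)
        = (fun t => X ^ (ε - η + (2 * t + 1)) * C (P (ε - η + (2 * t + 1)))
            + X ^ (ε - η + 2 * t) * C (P (ε - η + 2 * t))) (η + 1 - 1 - a) := by
      intro a ha
      have ha' : a ≤ η := by have := Finset.mem_range.mp ha; omega
      show _ = X ^ (ε - η + (2 * (η + 1 - 1 - a) + 1)) * C (P (ε - η + (2 * (η + 1 - 1 - a) + 1)))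
          + X ^ (ε - η + 2 * (η + 1 - 1 - a)) * C (P (ε - η + 2 * (η + 1 - 1 - a)))
      have e1 : ε - η + (2 * (η + 1 - 1 - a) + 1) = (η - a) + 1 + (ε - a) := by omega
      have e2 : ε - η + 2 * (η + 1 - 1 - a) = (η - a) + (ε - a) := by omega
      have e3 : k - 2 * a = (η - a) + 1 + (ε - a) := by omega
      have e4 : k - 1 - 2 * a = (η - a) + (ε - a) := by omega
      rw [e1, e2, e3, e4, pow_add, pow_add, pow_add, pow_one]
      ring
    exact (Finset.sum_congr rfl hGG).trans
      ((Finset.sum_range_reflect (fun t =>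
          X ^ (ε - η + (2 * t + 1)) * C (P (ε - η + (2 * t + 1)))
            + X ^ (ε - η + 2 * t) * C (P (ε - η + 2 * t))) (η + 1)).trans
        (sum_pair (fun j => X ^ (ε - η + j) * C (P (ε - η + j))) η))
  rw [diag, show k + 1 = (ε - η) + (2 * η + 2) by omega,
    Finset.sum_range_add (fun t => X ^ t * C (P t)) (ε - η) (2 * η + 2)]
  exact add_comm _ _

include hk hεη in
lemma core1 (p q : ℕ) (hp : p < k - η) (hq : q < η + 1) :
    ∑ b ∈ Finset.range k, ∑ a ∈ Finset.range k,
        el η p a * (X * C (af η k P a b) + C (bf η k P a b)) * el (k - 1 - η) q b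
      = if p = 0 ∧ q = 0 then ∑ t ∈ Finset.range (k + 1), X ^ t * C (P t) else 0 := by
  rw [show k - 1 - η = ε by omega]
  have hηk : η + 1 ≤ k := by omega
  have hεk : ε + 1 ≤ k := by omega
  rcases Nat.eq_zero_or_pos p with rfl | hp1
  · rcases Nat.eq_zero_or_pos q with rfl | hq1
    · rw [if_pos ⟨rfl, rfl⟩, Finset.sum_comm]
      exact main00 hk hεη P
    · -- p = 0, q ≥ 1 : column ε + q is empty
      rw [if_neg (by omega)]
      rw [Finset.sum_eq_single_of_mem (ε + q) (Finset.mem_range.mpr (by omega))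
        (fun x _ hx => Finset.sum_eq_zero fun a _ => by
          rw [el_pos ε q x (by omega), if_neg hx, mul_zero])]
      refine Finset.sum_eq_zero fun a _ => ?_
      have h1 : af η k P a (ε + q) = 0 := by
        unfold af
        rw [if_neg (by omega), if_neg (by omega)]
      have h2 : bf η k P a (ε + q) = 0 := by
        unfold bf
        rw [if_neg (by omega), if_neg (by omega)]
      rw [h1, h2]
      simp
  · have hgε : bf η k P (η + p) ε = 0 := by
      unfold bf
      rw [if_neg (by omega), if_neg (by omega)]
    have haf : ∀ b, b ≤ ε →
        af η k P (η + p) b = if b = 0 then 0 else -(bf η k P (η + p) (b - 1)) := by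
      intro b hb
      by_cases hb0 : b = 0
      · subst hb0
        rw [if_pos rfl]
        unfold af
        rw [if_neg (by omega), if_neg (by omega)]
      · rw [if_neg hb0]
        unfold af bf
        by_cases hc : η + 1 ≤ b ∧ η + p + b ≤ k
        · rw [if_neg (by omega), if_pos ⟨by omega, hc.1, hc.2⟩, if_neg (by omega),
            if_pos ⟨by omega, by omega, by omega, by omega⟩,
            show k - (η + p) - b = k - 1 - (η + p) - (b - 1) by omega]
        · rw [if_neg (by omega), if_neg (by omega), if_neg (by omega), if_neg (by omega)]
          simp
    rcases Nat.eq_zero_or_pos q with rfl | hq1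
    · -- p ≥ 1, q = 0 : telescoping row
      rw [if_neg (by omega), Finset.sum_comm]
      rw [Finset.sum_eq_single_of_mem (η + p) (Finset.mem_range.mpr (by omega))
        (fun x _ hx => Finset.sum_eq_zero fun b _ => by
          rw [el_pos η p x (by omega), if_neg hx, zero_mul, zero_mul])]
      have hterm : ∀ b ∈ Finset.range k,
          el η p (η + p) * (X * C (af η k P (η + p) b) + C (bf η k P (η + p) b)) * el ε 0 b
          = if b ≤ ε then
              (X * C (if b = 0 then 0 else -(bf η k P (η + p) (b - 1)))
                + C (bf η k P (η + p) b)) * X ^ (ε - b) else 0 := by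
        intro b _
        rw [el_pos η p (η + p) (by omega), if_pos rfl, one_mul, el_zero]
        by_cases hb : b ≤ ε
        · rw [if_pos hb, if_pos hb, haf b hb]
        · rw [if_neg hb, if_neg hb, mul_zero]
      rw [Finset.sum_congr rfl hterm, sum_restrict k ε hεk]
      exact teleZero ε (fun b => bf η k P (η + p) b) hgε
    · -- p ≥ 1, q ≥ 1 : corner entry vanishes
      rw [if_neg (by omega)]
      rw [Finset.sum_eq_single_of_mem (ε + q) (Finset.mem_range.mpr (by omega))
        (fun x _ hx => Finset.sum_eq_zero fun a _ => by
          rw [el_pos ε q x (by omega), if_neg hx, mul_zero])]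
      refine Finset.sum_eq_zero fun a _ => ?_
      by_cases hx : a = η + p
      · subst hx
        have h1 : af η k P (η + p) (ε + q) = 0 := by
          unfold af
          rw [if_neg (by omega), if_neg (by omega)]
        have h2 : bf η k P (η + p) (ε + q) = 0 := by
          unfold bf
          rw [if_neg (by omega), if_neg (by omega)]
        rw [h1, h2]
        simp
      · rw [el_pos η p a (by omega), if_neg hx, zero_mul, zero_mul]

include hk hεη in
lemma core2 (p q : ℕ) (hp : p < k - (k - 1 - η)) (hq : q < (k - 1 - η) + 1) :
    ∑ b ∈ Finset.range k, ∑ a ∈ Finset.range k,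
        el (k - 1 - η) p a * (X * C (af η k P a b) + C (bf η k P a b))
          * el (k - 1 - (k - 1 - η)) q b
      = if p = 0 ∧ q = 0 then ∑ t ∈ Finset.range (k + 1), X ^ t * C (P t) else 0 := by
  rw [show k - 1 - η = ε by omega, show k - 1 - ε = η by omega]
  have hp' : p < η + 1 := by omega
  have hq' : q < ε + 1 := by omega
  have hηk : η + 1 ≤ k := by omega
  have hεk : ε + 1 ≤ k := by omega
  rcases Nat.eq_zero_or_pos p with rfl | hp1
  · rcases Nat.eq_zero_or_pos q with rfl | hq1
    · rw [if_pos ⟨rfl, rfl⟩]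
      have hswap : ∀ a b : ℕ,
          el ε 0 a * (X * C (af η k P a b) + C (bf η k P a b)) * el η 0 b
            = el η 0 b * (X * C (af η k P b a) + C (bf η k P b a)) * el ε 0 a := by
        intro a b
        rw [af_symm, bf_symm]
        ring
      rw [Finset.sum_congr rfl (fun b _ => Finset.sum_congr rfl (fun a _ => hswap a b))]
      exact main00 hk hεη P
    · -- p = 0, q ≥ 1 : telescoping column
      have hgε : bf η k P ε (η + q) = 0 := by
        unfold bf
        rw [if_neg (by omega), if_neg (by omega)]
      have haf : ∀ a, a ≤ ε →
          af η k P a (η + q) = if a = 0 then 0 else -(bf η k P (a - 1) (η + q)) := by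
        intro a ha
        by_cases ha0 : a = 0
        · subst ha0
          rw [if_pos rfl]
          unfold af
          rw [if_neg (by omega), if_neg (by omega)]
        · rw [if_neg ha0]
          unfold af bf
          by_cases hc : η + 1 ≤ a ∧ a + (η + q) ≤ k
          · rw [if_neg (by omega), if_pos ⟨hc.1, by omega, by omega⟩, if_neg (by omega),
              if_pos ⟨by omega, by omega, by omega, by omega⟩,
              show k - a - (η + q) = k - 1 - (a - 1) - (η + q) by omega]
          · rw [if_neg (by omega), if_neg (by omega), if_neg (by omega), if_neg (by omega)]
            simp
      rw [if_neg (by omega)]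
      rw [Finset.sum_eq_single_of_mem (η + q) (Finset.mem_range.mpr (by omega))
        (fun x _ hx => Finset.sum_eq_zero fun a _ => by
          rw [el_pos η q x (by omega), if_neg hx, mul_zero])]
      have hterm : ∀ a ∈ Finset.range k,
          el ε 0 a * (X * C (af η k P a (η + q)) + C (bf η k P a (η + q)))
              * el η q (η + q)
          = if a ≤ ε then
              (X * C (if a = 0 then 0 else -(bf η k P (a - 1) (η + q)))
                + C (bf η k P a (η + q))) * X ^ (ε - a) else 0 := by
        intro a _
        rw [el_pos η q (η + q) (by omega), if_pos rfl, mul_one, el_zero]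
        by_cases ha : a ≤ ε
        · rw [if_pos ha, if_pos ha, haf a ha]
          ring
        · rw [if_neg ha, if_neg ha, zero_mul]
      rw [Finset.sum_congr rfl hterm, sum_restrict k ε hεk]
      exact teleZero ε (fun a => bf η k P a (η + q)) hgε
  · rcases Nat.eq_zero_or_pos q with rfl | hq1
    · -- p ≥ 1, q = 0 : row ε + p is empty
      rw [if_neg (by omega), Finset.sum_comm]
      rw [Finset.sum_eq_single_of_mem (ε + p) (Finset.mem_range.mpr (by omega))
        (fun x _ hx => Finset.sum_eq_zero fun b _ => by
          rw [el_pos ε p x (by omega), if_neg hx, zero_mul, zero_mul])]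
      refine Finset.sum_eq_zero fun b _ => ?_
      have h1 : af η k P (ε + p) b = 0 := by
        unfold af
        rw [if_neg (by omega)]
        by_cases hb : b ≤ η
        · rw [if_neg (by omega)]
        · by_cases hc : η + 1 ≤ b ∧ ε + p + b ≤ k
          · exfalso; omega
          · rw [if_neg (by omega)]
      have h2 : bf η k P (ε + p) b = 0 := by
        unfold bf
        rw [if_neg (by omega), if_neg (by omega)]
      rw [h1, h2]
      simp
    · -- p ≥ 1, q ≥ 1 : corner entry vanishes
      rw [if_neg (by omega)]
      rw [Finset.sum_eq_single_of_mem (η + q) (Finset.mem_range.mpr (by omega))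
        (fun x _ hx => Finset.sum_eq_zero fun a _ => by
          rw [el_pos η q x (by omega), if_neg hx, mul_zero])]
      refine Finset.sum_eq_zero fun a _ => ?_
      by_cases hx : a = ε + p
      · subst hx
        have h1 : af η k P (ε + p) (η + q) = 0 := by
          unfold af
          rw [if_neg (by omega), if_neg (by omega)]
        have h2 : bf η k P (ε + p) (η + q) = 0 := by
          unfold bf
          rw [if_neg (by omega), if_neg (by omega)]
        rw [h1, h2]
        simp
      · rw [el_pos ε p a (by omega), if_neg hx, zero_mul, zero_mul]

end Region

lemma bridge (n k h' : ℕ) (Lx Ly : Matrix (Fin k × Fin n) (Fin k × Fin n) ℝ)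
    (p : Fin (k - h') × Fin n) (q : Fin (h' + 1) × Fin n) :
    (Eleft n k h' * pencilM Lx Ly * Eright n k h') p q
      = ∑ b : Fin k, ∑ a : Fin k,
          el h' ↑p.1 ↑a * (X * C (Lx (a, p.2) (b, q.2)) + C (Ly (a, p.2) (b, q.2)))
            * el (k - 1 - h') ↑q.1 ↑b := by
  have hl : ∀ z : Fin k × Fin n,
      Eleft n k h' p z = if p.2 = z.2 then el h' ↑p.1 ↑z.1 else 0 := by
    intro z
    unfold Eleft el
    by_cases hz : p.2 = z.2 <;> simp [hz]
  have hr : ∀ z : Fin k × Fin n,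
      Eright n k h' z q = if z.2 = q.2 then el (k - 1 - h') ↑q.1 ↑z.1 else 0 := by
    intro z
    unfold Eright el
    by_cases hz : z.2 = q.2 <;> simp [hz]
  simp only [Matrix.mul_apply, Finset.sum_mul, hl, hr, pencilM, Matrix.of_apply,
    ite_mul, mul_ite, zero_mul, mul_zero, Fintype.sum_prod_type,
    Finset.sum_ite_irrel, Finset.sum_const_zero, Finset.sum_ite_eq, Finset.sum_ite_eq',
    Finset.mem_univ, if_true]

lemma fin_to_range (k : ℕ) (F : ℕ → ℕ → Polynomial ℝ) :
    ∑ b : Fin k, ∑ a : Fin k, F ↑a ↑b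
      = ∑ b ∈ Finset.range k, ∑ a ∈ Finset.range k, F a b :=
  by
  rw [Fin.sum_univ_eq_sum_range (fun bb => ∑ a : Fin k, F ↑a bb) k]
  exact Finset.sum_congr rfl fun b _ => Fin.sum_univ_eq_sum_range (fun aa => F aa b) k

end Stmt11Aux

theorem stmt11 (n k ε η : ℕ) (hk : k = ε + η + 1) (hεη : η ≤ ε)
    (Pc : ℕ → Matrix (Fin n) (Fin n) ℝ) (hdeg : Pc k ≠ 0) :
    ∃ Lx Ly : Matrix (Fin k × Fin n) (Fin k × Fin n) ℝ,
      Eleft n k η * pencilM Lx Ly * Eright n k η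
        = GRHS n k η 1 (polyOf n n k Pc) ∧
      Eleft n k (k - 1 - η) * pencilM Lx Ly * Eright n k (k - 1 - η)
        = GRHS n k (k - 1 - η) 1 (polyOf n n k Pc) := by

  refine ⟨Matrix.of fun p q => Stmt11Aux.af η k (fun t => Pc t p.2 q.2) ↑p.1 ↑q.1,
    Matrix.of fun p q => Stmt11Aux.bf η k (fun t => Pc t p.2 q.2) ↑p.1 ↑q.1, ?_, ?_⟩
  · ext ⟨p1, r⟩ ⟨q1, c⟩
    rw [Stmt11Aux.bridge]
    simp only [Matrix.of_apply]
    rw [Stmt11Aux.fin_to_range k (fun a b =>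
      Stmt11Aux.el η ↑p1 a * (X * C (Stmt11Aux.af η k (fun t => Pc t r c) a b)
        + C (Stmt11Aux.bf η k (fun t => Pc t r c) a b)) * Stmt11Aux.el (k - 1 - η) ↑q1 b)]
    rw [Stmt11Aux.core1 hk hεη (fun t => Pc t r c) ↑p1 ↑q1 p1.isLt q1.isLt]
    simp [GRHS, polyOf]
  · ext ⟨p1, r⟩ ⟨q1, c⟩
    rw [Stmt11Aux.bridge]
    simp only [Matrix.of_apply]
    rw [Stmt11Aux.fin_to_range k (fun a b =>
      Stmt11Aux.el (k - 1 - η) ↑p1 a * (X * C (Stmt11Aux.af η k (fun t => Pc t r c) a b)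
        + C (Stmt11Aux.bf η k (fun t => Pc t r c) a b)) * Stmt11Aux.el (k - 1 - (k - 1 - η)) ↑q1 b)]
    rw [Stmt11Aux.core2 hk hεη (fun t => Pc t r c) ↑p1 ↑q1 p1.isLt q1.isLt]
    simp [GRHS, polyOf]
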